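/- Let Δ be a graph, G a group of automorphisms of Δ acting also on a group N by automorphisms, and ℓ : D(Δ) → N a G-equivariant voltage assignment (i.e. ℓ(v^g, w^g) = (ℓ(v,w))^g for all g ∈ G and adjacent v, w). Let Γ be the lift of Δ with respect to ℓ. Then the semidirect product G ⋉ N acts on Γ by graph automorphisms via (v, n)^{(g,k)} = (v^g, n^g · k), and this action is faithful. -/

import Mathlib

/-- The lift of a graph `Δ` with respect to a voltage assignment `ℓ : D(Δ) → N`. -/
def liftGraph {V N : Type*} [Group N] (Δ : SimpleGraph V) (ℓ : V → V → N)
    (hℓ : ∀ u v, Δ.Adj u v → ℓ u v = (ℓ v u)⁻¹) : SimpleGraph (V × N) where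
  Adj p q := Δ.Adj p.1 q.1 ∧ ℓ p.1 q.1 = p.2 * q.2⁻¹
  symm := by
    constructor
    rintro ⟨u, m⟩ ⟨v, n⟩ ⟨h1, h2⟩
    exact ⟨h1.symm, by rw [hℓ v u h1.symm, h2]; group⟩
  loopless := by constructor; rintro ⟨u, m⟩ ⟨h, -⟩; exact Δ.loopless.irrefl u h

/-- if `ℓ` is `G`-equivariant (for a group `G` acting on the right on `Δ` by
automorphisms and on `N` by group automorphisms), then the semidirect product `G ⋉ N`
acts faithfully on the lift by `(v,n)^{(g,k)} = (v^g, n^g·k)`.  Right actions are encoded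
by anti-homomorphism conditions. -/
theorem semidirect_product_acts_on_lift {V N G : Type*} [Group N] [Group G] [Nonempty V]
    (Δ : SimpleGraph V) (ℓ : V → V → N)
    (hℓ : ∀ u v, Δ.Adj u v → ℓ u v = (ℓ v u)⁻¹)
    -- the right action of G on Δ by graph automorphisms
    (a : G → Equiv.Perm V) (ha_one : ∀ v, a 1 v = v)
    (ha_mul : ∀ g h v, a (g * h) v = a h (a g v))
    (ha_adj : ∀ g u v, Δ.Adj u v ↔ Δ.Adj (a g u) (a g v))
    (ha_faithful : ∀ g, (∀ v, a g v = v) → g = 1)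
    -- the right action of G on N by group automorphisms
    (ν : G → N ≃* N) (hν_one : ∀ n, ν 1 n = n)
    (hν_mul : ∀ g h n, ν (g * h) n = ν h (ν g n))
    -- G-equivariance of the voltage assignment
    (hequiv : ∀ g u v, Δ.Adj u v → ℓ (a g u) (a g v) = ν g (ℓ u v)) :
    -- the action (v,n)^{(g,k)} = (v^g, n^g k) of G ⋉ N on the lift:
    (∀ g k, Function.Bijective (fun p : V × N => (a g p.1, ν g p.2 * k))) ∧
    -- it is by graph automorphisms:
    (∀ (g : G) (k : N) (p q : V × N),
        (liftGraph Δ ℓ hℓ).Adj p q ↔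
        (liftGraph Δ ℓ hℓ).Adj (a g p.1, ν g p.2 * k) (a g q.1, ν g q.2 * k)) ∧
    -- it is a right action of the semidirect product G ⋉ N (whose multiplication is
    -- (g,k)·(h,l) = (g·h, k^h·l)):
    (∀ (g h : G) (k l : N) (p : V × N),
        (a (g * h) p.1, ν (g * h) p.2 * (ν h k * l)) =
          (a h (a g p.1), ν h (ν g p.2 * k) * l)) ∧
    -- and it is faithful:
    (∀ (g : G) (k : N), (∀ p : V × N, (a g p.1, ν g p.2 * k) = p) → g = 1 ∧ k = 1) := by
  refine ⟨?_, ?_, ?_, ?_⟩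
  · intro g k
    constructor
    · rintro ⟨u, m⟩ ⟨v, n⟩ h
      simp only [Prod.mk.injEq] at h
      exact Prod.ext ((a g).injective h.1) ((ν g).injective (mul_right_cancel h.2))
    · rintro ⟨u, n⟩
      exact ⟨((a g).symm u, (ν g).symm (n * k⁻¹)), by simp⟩
  · intro g k p q
    constructor
    · rintro ⟨h1, h2⟩
      refine ⟨(ha_adj g p.1 q.1).mp h1, ?_⟩
      rw [hequiv g p.1 q.1 h1, h2, map_mul, map_inv]
      group
    · rintro ⟨h1, h2⟩
      have h1' := (ha_adj g p.1 q.1).mpr h1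
      refine ⟨h1', ?_⟩
      rw [hequiv g p.1 q.1 h1'] at h2
      apply (ν g).injective
      rw [h2, map_mul, map_inv]
      group
  · intro g h k l p
    refine Prod.ext (ha_mul g h p.1) ?_
    rw [hν_mul g h p.2, map_mul]
    group
  · intro g k hfix
    have hg : g = 1 := ha_faithful g fun v => congrArg Prod.fst (hfix (v, 1))
    have hk := congrArg Prod.snd (hfix (Classical.arbitrary V, 1))
    simp only at hk
    rw [map_one, one_mul] at hk
    exact ⟨hg, hk⟩
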